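/- The three coordinate points (1:0:0), (0:1:0), (0:0:1) form a tangential triangle for the cubic C: xy² + yz² + zx² + 3bxyz = 0 (with b³ ≠ −1): the tangent line to C at each coordinate point meets C at the next coordinate point with the required multiplicities. -/

import Mathlib

open MvPolynomial

noncomputable section

abbrev Poly3 := MvPolynomial (Fin 3) ℂ

/-- The multiplicative set of polynomials not vanishing at `v`. -/
def nonvanishing (v : Fin 3 → ℂ) : Submonoid Poly3 where
  carrier := {g | aeval v g ≠ 0}
  mul_mem' := by
    intro a b ha hb
    simp only [Set.mem_setOf_eq, map_mul] at *
    exact mul_ne_zero ha hb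
  one_mem' := by simp

/-- An index where `v` does not vanish (if any). -/
def chartIdx (v : Fin 3 → ℂ) : Fin 3 :=
  if h : ∃ i, v i ≠ 0 then h.choose else 0

/-- Local intersection multiplicity at the point of `ℙ²` represented by `v`:
the `ℂ`-dimension of the localization at `v` of the coordinate ring of the
scheme cut out by `F`, `G` and the affine chart equation. -/
def imult (F G : Poly3) (v : Fin 3 → ℂ) : ℕ :=
  letI : Module ℂ (LocalizedModule (nonvanishing v)
      (Poly3 ⧸ Ideal.span {F, G, X (chartIdx v) - MvPolynomial.C (v (chartIdx v))})) :=
    Module.compHom _ (algebraMap ℂ Poly3)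
  Module.finrank ℂ (LocalizedModule (nonvanishing v)
    (Poly3 ⧸ Ideal.span {F, G, X (chartIdx v) - MvPolynomial.C (v (chartIdx v))}))

/-- `w` represents the same projective point as `v`. -/
def SameProjPoint (v w : Fin 3 → ℂ) : Prop := ∃ c : ℂ, c ≠ 0 ∧ w = c • v

/-- The curve `F = 0` is smooth (nonsingular) at the point represented by `v`. -/
def CurveSmoothAt (F : Poly3) (v : Fin 3 → ℂ) : Prop := ∃ j, aeval v (pderiv j F) ≠ 0

/-- The plane curve `F = 0` is smooth. -/
def SmoothCurve (F : Poly3) : Prop :=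
  ∀ v : Fin 3 → ℂ, v ≠ 0 → aeval v F = 0 → CurveSmoothAt F v

/-- The linear form defining the (projective) tangent line to `F = 0`
at the point represented by `v`. -/
def tangentLine (F : Poly3) (v : Fin 3 → ℂ) : Poly3 :=
  ∑ j, MvPolynomial.C (aeval v (pderiv j F)) * X j

/-- The curves `F = 0` and `G = 0` meet only at the point represented by `v`. -/
def OnlyMeetAt (F G : Poly3) (v : Fin 3 → ℂ) : Prop :=
  ∀ w : Fin 3 → ℂ, w ≠ 0 → aeval w F = 0 → aeval w G = 0 → SameProjPoint v w

/-- The intersection cycle of `F = 0` and `G = 0` is `9p`, where `p` is the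
point represented by `v`. -/
def CycleNine (F G : Poly3) (v : Fin 3 → ℂ) : Prop :=
  aeval v F = 0 ∧ aeval v G = 0 ∧ OnlyMeetAt F G v ∧ imult F G v = 9

/-- `v` represents an inflection point of the curve `F = 0`. -/
def IsFlex (F : Poly3) (v : Fin 3 → ℂ) : Prop :=
  aeval v F = 0 ∧ 3 ≤ imult F (tangentLine F v) v

end

noncomputable section Aux

-- step 1: the algebra equivalence
lemma quot_equiv (i j k : Fin 3) (n : ℕ) (hij : i ≠ j) (hik : i ≠ k) (hjk : j ≠ k)
    (hcov : ∀ l : Fin 3, l = i ∨ l = j ∨ l = k) :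
    ∃ e : (Poly3 ⧸ (Ideal.span {X j ^ n, X k, X i - C 1} : Ideal Poly3)) ≃ₐ[ℂ]
      AdjoinRoot ((Polynomial.X : Polynomial ℂ) ^ n),
      ∀ p : Poly3, e (Ideal.Quotient.mk _ p) = aeval
        (fun l => if l = i then 1 else if l = j then AdjoinRoot.root _ else 0) p := by
  set J : Ideal Poly3 := Ideal.span {X j ^ n, X k, X i - C 1} with hJ
  have hroot : (AdjoinRoot.root ((Polynomial.X : Polynomial ℂ) ^ n)) ^ n = 0 := by
    rw [← AdjoinRoot.mk_X, ← map_pow, AdjoinRoot.mk_self]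
  set f : Fin 3 → AdjoinRoot ((Polynomial.X : Polynomial ℂ) ^ n) :=
    fun l => if l = i then 1 else if l = j then AdjoinRoot.root _ else 0 with hf
  have hfi : f i = 1 := by simp [hf]
  have hfj : f j = AdjoinRoot.root _ := by simp [hf, hij.symm]
  have hfk : f k = 0 := by simp [hf, hik.symm, hjk.symm]
  have hker : ∀ a ∈ J, aeval f a = 0 := by
    intro a ha
    have hle : J ≤ RingHom.ker (aeval f).toRingHom := by
      rw [hJ, Ideal.span_le]
      rintro x hx
      simp only [Set.mem_insert_iff, Set.mem_singleton_iff] at hx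
      rcases hx with rfl | rfl | rfl <;>
        simp [RingHom.mem_ker, hfj, hfk, hfi, hroot]
    exact hle ha
  set ψ : (Poly3 ⧸ J) →ₐ[ℂ] AdjoinRoot ((Polynomial.X : Polynomial ℂ) ^ n) :=
    Ideal.Quotient.liftₐ J (aeval f) hker with hψ
  have hψmk : ∀ p : Poly3, ψ (Ideal.Quotient.mk J p) = aeval f p := by
    intro p; rw [hψ]; rfl
  have hXn : Polynomial.aeval (Ideal.Quotient.mk J (X j : Poly3))
      ((Polynomial.X : Polynomial ℂ) ^ n) = 0 := by
    rw [map_pow, Polynomial.aeval_X, ← map_pow, Ideal.Quotient.eq_zero_iff_mem]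
    exact Ideal.subset_span (by simp)
  set χ : AdjoinRoot ((Polynomial.X : Polynomial ℂ) ^ n) →ₐ[ℂ] (Poly3 ⧸ J) :=
    AdjoinRoot.liftAlgHom _ (Algebra.ofId _ _) _ (by simpa [Polynomial.aeval_def] using hXn) with hχ
  refine ⟨AlgEquiv.ofAlgHom ψ χ ?_ ?_, fun p => hψmk p⟩
  · apply AdjoinRoot.algHom_ext
    show ψ (χ (AdjoinRoot.root _)) = AdjoinRoot.root _
    rw [hχ, AdjoinRoot.liftAlgHom_root, hψmk, aeval_X, hfj]
  · apply Ideal.Quotient.algHom_ext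
    apply MvPolynomial.algHom_ext
    intro l
    rcases hcov l with rfl | rfl | rfl
    · show χ (ψ (Ideal.Quotient.mk J (X l))) = Ideal.Quotient.mk J (X l)
      rw [hψmk, aeval_X, hfi, map_one, eq_comm, ← sub_eq_zero,
        show (1 : Poly3 ⧸ J) = Ideal.Quotient.mk J (C 1) by rw [MvPolynomial.C_1, map_one],
        ← map_sub, Ideal.Quotient.eq_zero_iff_mem]
      exact Ideal.subset_span (by simp)
    · show χ (ψ (Ideal.Quotient.mk J (X l))) = Ideal.Quotient.mk J (X l)
      rw [hψmk, aeval_X, hfj, hχ]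
      exact AdjoinRoot.liftAlgHom_root _ _ _ _
    · show χ (ψ (Ideal.Quotient.mk J (X l))) = Ideal.Quotient.mk J (X l)
      rw [hψmk, aeval_X, hfk, map_zero, eq_comm, Ideal.Quotient.eq_zero_iff_mem]
      exact Ideal.subset_span (by simp)

-- step 2: units in AdjoinRoot (X^n)
lemma adjoinRoot_isUnit (n : ℕ) (hn : 0 < n)
    (z : AdjoinRoot ((Polynomial.X : Polynomial ℂ) ^ n))
    (hz : AdjoinRoot.liftAlgHom _ (Algebra.ofId _ _) (0 : ℂ) (by simp [zero_pow hn.ne']) z ≠ 0) : IsUnit z := by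
  have hroot : (AdjoinRoot.root ((Polynomial.X : Polynomial ℂ) ^ n)) ^ n = 0 := by
    rw [← AdjoinRoot.mk_X, ← map_pow, AdjoinRoot.mk_self]
  obtain ⟨p, rfl⟩ := AdjoinRoot.mk_surjective z
  rw [AdjoinRoot.liftAlgHom_mk] at hz
  change Polynomial.aeval (0:ℂ) p ≠ 0 at hz
  have hdvd : Polynomial.X ∣ (p - Polynomial.C (Polynomial.aeval (0:ℂ) p)) := by
    rw [Polynomial.X_dvd_iff]
    simp [Polynomial.coeff_zero_eq_eval_zero, Polynomial.aeval_def, Polynomial.eval₂_at_apply]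
  obtain ⟨q, hq⟩ := hdvd
  have hzdecomp : AdjoinRoot.mk _ p =
      algebraMap ℂ (AdjoinRoot ((Polynomial.X : Polynomial ℂ) ^ n)) (Polynomial.aeval (0:ℂ) p) +
        AdjoinRoot.root ((Polynomial.X : Polynomial ℂ) ^ n) * AdjoinRoot.mk _ q := by
    have := congrArg (AdjoinRoot.mk ((Polynomial.X : Polynomial ℂ) ^ n)) hq
    rw [map_sub, map_mul, sub_eq_iff_eq_add] at this
    rw [this, AdjoinRoot.mk_X, AdjoinRoot.mk_C, AdjoinRoot.algebraMap_eq]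
    ring
  rw [hzdecomp]
  have hnil : IsNilpotent (AdjoinRoot.root ((Polynomial.X : Polynomial ℂ) ^ n) *
      AdjoinRoot.mk _ q) := ⟨n, by rw [mul_pow, hroot, zero_mul]⟩
  have hu : IsUnit (algebraMap ℂ (AdjoinRoot ((Polynomial.X : Polynomial ℂ) ^ n))
      (Polynomial.aeval (0:ℂ) p)) := (isUnit_iff_ne_zero.mpr hz).map _
  exact hnil.isUnit_add_left_of_commute hu (Commute.all _ _)

-- step 3: the finrank computation
set_option maxHeartbeats 1000000 in
lemma finrank_localized (v : Fin 3 → ℂ) (i j k : Fin 3) (n : ℕ) (hn : 0 < n)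
    (hij : i ≠ j) (hik : i ≠ k) (hjk : j ≠ k)
    (hcov : ∀ l : Fin 3, l = i ∨ l = j ∨ l = k)
    (hvi : v i = 1) (hv0 : ∀ l, l ≠ i → v l = 0) :
    letI : Module ℂ (LocalizedModule (nonvanishing v)
        (Poly3 ⧸ (Ideal.span {X j ^ n, X k, X i - C 1} : Ideal Poly3))) :=
      Module.compHom _ (algebraMap ℂ Poly3)
    Module.finrank ℂ (LocalizedModule (nonvanishing v)
      (Poly3 ⧸ (Ideal.span {X j ^ n, X k, X i - C 1} : Ideal Poly3))) = n := by
  set J : Ideal Poly3 := Ideal.span {X j ^ n, X k, X i - C 1} with hJ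
  set S := nonvanishing v with hS
  obtain ⟨e, he⟩ := quot_equiv i j k n hij hik hjk hcov
  -- every element of S maps to a unit in the quotient
  have hunit : ∀ s : S, IsUnit (Ideal.Quotient.mk J (s : Poly3)) := by
    intro s
    have hne : AdjoinRoot.liftAlgHom ((Polynomial.X : Polynomial ℂ) ^ n) (Algebra.ofId _ _) (0 : ℂ)
        (by simp [zero_pow hn.ne']) (e (Ideal.Quotient.mk J (s : Poly3))) ≠ 0 := by
      rw [he]
      have hcomp : (AdjoinRoot.liftAlgHom ((Polynomial.X : Polynomial ℂ) ^ n) (Algebra.ofId _ _) (0 : ℂ)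
          (by simp [zero_pow hn.ne'])).comp
          (aeval (fun l => if l = i then 1 else if l = j then AdjoinRoot.root _ else 0) :
            Poly3 →ₐ[ℂ] _) = aeval v := by
        apply MvPolynomial.algHom_ext
        intro l
        simp only [AlgHom.coe_comp, Function.comp_apply, aeval_X]
        rcases hcov l with rfl | rfl | rfl
        · simp [hvi]
        · rw [if_neg hij.symm, if_pos rfl, AdjoinRoot.liftAlgHom_root _ _, hv0 l hij.symm]
        · rw [if_neg hik.symm, if_neg hjk.symm, map_zero, hv0 l hik.symm]
      have := congrArg (fun φ : Poly3 →ₐ[ℂ] ℂ => φ (s : Poly3)) hcomp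
      simp only [AlgHom.coe_comp, Function.comp_apply] at this
      rw [this]
      exact s.2
    have := (adjoinRoot_isUnit n hn _ hne).map e.symm.toAlgHom
    have h2 : e.symm.toAlgHom (e (Ideal.Quotient.mk J (s : Poly3))) =
        Ideal.Quotient.mk J (s : Poly3) := e.symm_apply_apply _
    rwa [h2] at this
  haveI hloc : IsLocalizedModule S (LinearMap.id : (Poly3 ⧸ J) →ₗ[Poly3] (Poly3 ⧸ J)) := by
    constructor
    · intro s
      rw [Module.End.isUnit_iff]
      obtain ⟨u, hu⟩ := hunit s
      have hs : ∀ m : Poly3 ⧸ J, (algebraMap Poly3 (Module.End Poly3 (Poly3 ⧸ J)) (s : Poly3)) m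
          = Ideal.Quotient.mk J (s : Poly3) * m := by
        intro m
        obtain ⟨p, rfl⟩ := Ideal.Quotient.mk_surjective m
        rw [Module.algebraMap_end_apply, ← Ideal.Quotient.mk_eq_mk, ← Submodule.Quotient.mk_smul,
          smul_eq_mul, Ideal.Quotient.mk_eq_mk, map_mul]
        rfl
      constructor
      · intro x y hxy
        rw [hs, hs, ← hu, u.mul_right_inj] at hxy
        exact hxy
      · intro y
        exact ⟨(↑u⁻¹ : Poly3 ⧸ J) * y, by rw [hs, ← hu, ← mul_assoc, u.mul_inv, one_mul]⟩
    · intro y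
      exact ⟨(y, 1), by simp⟩
    · intro x y h
      exact ⟨1, by simpa using h⟩
  let e1 : LocalizedModule S (Poly3 ⧸ J) ≃ₗ[Poly3] (Poly3 ⧸ J) :=
    IsLocalizedModule.iso S (LinearMap.id : (Poly3 ⧸ J) →ₗ[Poly3] (Poly3 ⧸ J))
  -- the ℂ-linear equivalence
  have hsmul : ∀ (c : ℂ) (m : Poly3 ⧸ J), e ((algebraMap ℂ Poly3 c) • m) = c • e m := by
    intro c m
    obtain ⟨p, rfl⟩ := Ideal.Quotient.mk_surjective m
    rw [← Ideal.Quotient.mk_eq_mk, ← Submodule.Quotient.mk_smul, smul_eq_mul,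
      Ideal.Quotient.mk_eq_mk, map_mul, map_mul,
      show (Ideal.Quotient.mk J) (algebraMap ℂ Poly3 c) = algebraMap ℂ (Poly3 ⧸ J) c from rfl,
      AlgEquiv.commutes, ← Algebra.smul_def]
    rfl
  letI : Module ℂ (LocalizedModule S (Poly3 ⧸ J)) := Module.compHom _ (algebraMap ℂ Poly3)
  let E : LocalizedModule S (Poly3 ⧸ J) ≃ₗ[ℂ] AdjoinRoot ((Polynomial.X : Polynomial ℂ) ^ n) :=
    { toFun := fun x => e (e1 x)
      invFun := fun y => e1.symm (e.symm y)
      left_inv := fun x => by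
        dsimp only
        rw [AlgEquiv.symm_apply_apply, LinearEquiv.symm_apply_apply]
      right_inv := fun y => by
        dsimp only
        rw [LinearEquiv.apply_symm_apply, AlgEquiv.apply_symm_apply]
      map_add' := fun x y => by
        rw [map_add, map_add]
      map_smul' := fun c x => by
        rw [RingHom.id_apply]
        show e (e1 ((algebraMap ℂ Poly3 c) • x)) = c • e (e1 x)
        rw [map_smul, hsmul] }
  rw [E.finrank_eq]
  have hXn0 : ((Polynomial.X : Polynomial ℂ) ^ n) ≠ 0 := pow_ne_zero _ Polynomial.X_ne_zero
  rw [(AdjoinRoot.powerBasis hXn0).finrank, AdjoinRoot.powerBasis_dim,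
    Polynomial.natDegree_X_pow]

lemma chartIdx_eq (v : Fin 3 → ℂ) (i : Fin 3) (hvi : v i ≠ 0)
    (hv0 : ∀ l, l ≠ i → v l = 0) : chartIdx v = i := by
  have h : ∃ l, v l ≠ 0 := ⟨i, hvi⟩
  rw [chartIdx, dif_pos h]
  by_contra hne
  exact h.choose_spec (hv0 _ hne)

lemma span_triple_eq (Fp A B Cc q r : Poly3) (h : Fp = A + (q * B + r * Cc)) :
    Ideal.span {Fp, B, Cc} = Ideal.span {A, B, Cc} := by
  apply le_antisymm <;> rw [Ideal.span_le] <;> intro x hx <;>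
    simp only [Set.mem_insert_iff, Set.mem_singleton_iff] at hx
  · rcases hx with rfl | rfl | rfl
    · rw [h]
      exact add_mem (Ideal.subset_span (by simp)) (add_mem
        (Ideal.mul_mem_left _ q (Ideal.subset_span (by simp)))
        (Ideal.mul_mem_left _ r (Ideal.subset_span (by simp))))
    · exact Ideal.subset_span (by simp)
    · exact Ideal.subset_span (by simp)
  · rcases hx with rfl | rfl | rfl
    · have h2 : x = Fp - (q * B + r * Cc) := by rw [h]; ring
      rw [h2]
      exact sub_mem (Ideal.subset_span (by simp)) (add_mem
        (Ideal.mul_mem_left _ q (Ideal.subset_span (by simp)))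
        (Ideal.mul_mem_left _ r (Ideal.subset_span (by simp))))
    · exact Ideal.subset_span (by simp)
    · exact Ideal.subset_span (by simp)

lemma imult_eq (F G : Poly3) (v : Fin 3 → ℂ) (i j k : Fin 3) (n : ℕ) (hn : 0 < n)
    (hij : i ≠ j) (hik : i ≠ k) (hjk : j ≠ k)
    (hcov : ∀ l : Fin 3, l = i ∨ l = j ∨ l = k)
    (hvi : v i = 1) (hv0 : ∀ l, l ≠ i → v l = 0)
    (hI : (Ideal.span {F, G, X i - C 1} : Ideal Poly3) =
      Ideal.span {X j ^ n, X k, X i - C 1}) :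
    imult F G v = n := by
  have hc : chartIdx v = i := chartIdx_eq v i (by rw [hvi]; exact one_ne_zero) hv0
  have key : ∀ I : Ideal Poly3,
      Ideal.span {F, G, X (chartIdx v) - MvPolynomial.C (v (chartIdx v))} = I →
      imult F G v = (letI : Module ℂ (LocalizedModule (nonvanishing v) (Poly3 ⧸ I)) :=
        Module.compHom _ (algebraMap ℂ Poly3)
      Module.finrank ℂ (LocalizedModule (nonvanishing v) (Poly3 ⧸ I))) := by
    intro I h; subst h; rfl
  have hI' : Ideal.span {F, G, X (chartIdx v) - MvPolynomial.C (v (chartIdx v))} =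
      (Ideal.span {X j ^ n, X k, X i - C 1} : Ideal Poly3) := by
    rw [hc, hvi, hI]
  rw [key _ hI']
  exact finrank_localized v i j k n hn hij hik hjk hcov hvi hv0

lemma sameAxis0 (w : Fin 3 → ℂ) (hw : w ≠ 0) (h1 : w 1 = 0) (h2 : w 2 = 0) :
    ∃ c : ℂ, c ≠ 0 ∧ w = c • ![1,0,0] := by
  refine ⟨w 0, fun h0 => hw ?_, ?_⟩
  · funext l; fin_cases l <;> simp [h0, h1, h2]
  · funext l; fin_cases l <;> simp [h1, h2]

lemma sameAxis1 (w : Fin 3 → ℂ) (hw : w ≠ 0) (h0 : w 0 = 0) (h2 : w 2 = 0) :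
    ∃ c : ℂ, c ≠ 0 ∧ w = c • ![0,1,0] := by
  refine ⟨w 1, fun h1 => hw ?_, ?_⟩
  · funext l; fin_cases l <;> simp [h0, h1, h2]
  · funext l; fin_cases l <;> simp [h0, h2]

lemma sameAxis2 (w : Fin 3 → ℂ) (hw : w ≠ 0) (h0 : w 0 = 0) (h1 : w 1 = 0) :
    ∃ c : ℂ, c ≠ 0 ∧ w = c • ![0,0,1] := by
  refine ⟨w 2, fun h2 => hw ?_, ?_⟩
  · funext l; fin_cases l <;> simp [h0, h1, h2]
  · funext l; fin_cases l <;> simp [h0, h1]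

end Aux

/-- The tangent line to `F = 0` at the point represented by `a` meets the curve
in the cycle `2a + b`. -/
def TangentMeetsInCycle (F : Poly3) (a b : Fin 3 → ℂ) : Prop :=
  imult F (tangentLine F a) a = 2 ∧ imult F (tangentLine F a) b = 1 ∧
  ∀ w : Fin 3 → ℂ, w ≠ 0 → MvPolynomial.aeval w F = 0 →
    MvPolynomial.aeval w (tangentLine F a) = 0 →
    SameProjPoint a w ∨ SameProjPoint b w

/-- `p₁, p₂, p₃` form a tangential triangle for the cubic `F = 0`. -/
def TangentialTriangle (F : Poly3) (p₁ p₂ p₃ : Fin 3 → ℂ) : Prop :=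
  TangentMeetsInCycle F p₁ p₂ ∧ TangentMeetsInCycle F p₂ p₃ ∧
    TangentMeetsInCycle F p₃ p₁

set_option maxHeartbeats 2000000 in
open MvPolynomial in
/-- The three coordinate points `(1:0:0)`, `(0:1:0)`, `(0:0:1)` form a
tangential triangle for the cubic `xy² + yz² + zx² + 3bxyz = 0` (with
`b³ ≠ -1`). -/
theorem coordinate_points_tangential_triangle (b : ℂ) (hb : b ^ 3 ≠ -1) :
    TangentialTriangle
      (X 0 * X 1 ^ 2 + X 1 * X 2 ^ 2 + X 2 * X 0 ^ 2 +
        MvPolynomial.C (3 * b) * (X 0 * X 1 * X 2) : Poly3)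
      ![1, 0, 0] ![0, 1, 0] ![0, 0, 1] := by
  set F : Poly3 := X 0 * X 1 ^ 2 + X 1 * X 2 ^ 2 + X 2 * X 0 ^ 2 +
      MvPolynomial.C (3 * b) * (X 0 * X 1 * X 2) with hF
  have hL1 : tangentLine F ![1,0,0] = X 2 := by
    rw [tangentLine, Fin.sum_univ_three]
    simp [hF, pderiv_mul, pderiv_pow, pderiv_X_self, pderiv_X_of_ne]
  have hL2 : tangentLine F ![0,1,0] = X 0 := by
    rw [tangentLine, Fin.sum_univ_three]
    simp [hF, pderiv_mul, pderiv_pow, pderiv_X_self, pderiv_X_of_ne]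
  have hL3 : tangentLine F ![0,0,1] = X 1 := by
    rw [tangentLine, Fin.sum_univ_three]
    simp [hF, pderiv_mul, pderiv_pow, pderiv_X_self, pderiv_X_of_ne]
  have hv1 : ∀ l, l ≠ 0 → (![1,0,0] : Fin 3 → ℂ) l = 0 := by
    intro l hl; fin_cases l <;> simp_all
  have hv2 : ∀ l, l ≠ 1 → (![0,1,0] : Fin 3 → ℂ) l = 0 := by
    intro l hl; fin_cases l <;> simp_all
  have hv3 : ∀ l, l ≠ 2 → (![0,0,1] : Fin 3 → ℂ) l = 0 := by
    intro l hl; fin_cases l <;> simp_all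
  have hI1 : (Ideal.span {F, X 2, X 0 - C 1} : Ideal Poly3) =
      Ideal.span {X 1 ^ 2, X 2, X 0 - C 1} :=
    span_triple_eq F (X 1 ^ 2) (X 2) (X 0 - C 1)
      (X 1 * X 2 + X 0 ^ 2 + C (3*b) * (X 0 * X 1)) (X 1 ^ 2) (by rw [hF, MvPolynomial.C_1]; ring)
  have hI2 : (Ideal.span {F, X 2, X 1 - C 1} : Ideal Poly3) =
      Ideal.span {X 0 ^ 1, X 2, X 1 - C 1} :=
    span_triple_eq F (X 0 ^ 1) (X 2) (X 1 - C 1)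
      (X 1 * X 2 + X 0 ^ 2 + C (3*b) * (X 0 * X 1)) (X 0 * (X 1 + 1)) (by rw [hF, MvPolynomial.C_1]; ring)
  have hI3 : (Ideal.span {F, X 0, X 1 - C 1} : Ideal Poly3) =
      Ideal.span {X 2 ^ 2, X 0, X 1 - C 1} :=
    span_triple_eq F (X 2 ^ 2) (X 0) (X 1 - C 1)
      (X 1 ^ 2 + X 0 * X 2 + C (3*b) * (X 1 * X 2)) (X 2 ^ 2) (by rw [hF, MvPolynomial.C_1]; ring)
  have hI4 : (Ideal.span {F, X 0, X 2 - C 1} : Ideal Poly3) =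
      Ideal.span {X 1 ^ 1, X 0, X 2 - C 1} :=
    span_triple_eq F (X 1 ^ 1) (X 0) (X 2 - C 1)
      (X 1 ^ 2 + X 0 * X 2 + C (3*b) * (X 1 * X 2)) (X 1 * (X 2 + 1)) (by rw [hF, MvPolynomial.C_1]; ring)
  have hI5 : (Ideal.span {F, X 1, X 2 - C 1} : Ideal Poly3) =
      Ideal.span {X 0 ^ 2, X 1, X 2 - C 1} :=
    span_triple_eq F (X 0 ^ 2) (X 1) (X 2 - C 1)
      (X 0 * X 1 + X 2 ^ 2 + C (3*b) * (X 0 * X 2)) (X 0 ^ 2) (by rw [hF, MvPolynomial.C_1]; ring)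
  have hI6 : (Ideal.span {F, X 1, X 0 - C 1} : Ideal Poly3) =
      Ideal.span {X 2 ^ 1, X 1, X 0 - C 1} :=
    span_triple_eq F (X 2 ^ 1) (X 1) (X 0 - C 1)
      (X 0 * X 1 + X 2 ^ 2 + C (3*b) * (X 0 * X 2)) (X 2 * (X 0 + 1)) (by rw [hF, MvPolynomial.C_1]; ring)
  unfold TangentialTriangle TangentMeetsInCycle
  rw [hL1, hL2, hL3]
  refine ⟨⟨?_, ?_, ?_⟩, ⟨?_, ?_, ?_⟩, ⟨?_, ?_, ?_⟩⟩
  · exact imult_eq F (X 2) ![1,0,0] 0 1 2 2 (by norm_num) (by decide) (by decide) (by decide)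
      (by decide) rfl hv1 hI1
  · exact imult_eq F (X 2) ![0,1,0] 1 0 2 1 (by norm_num) (by decide) (by decide) (by decide)
      (by decide) rfl hv2 hI2
  · -- classification for tangent z = 0
    intro w hw h2 h3
    have hw2 : w 2 = 0 := by simpa using h3
    have hFw : w 0 * w 1 ^ 2 = 0 := by
      have := h2
      rw [hF] at this
      simpa [hw2] using this
    rcases mul_eq_zero.mp hFw with h | h
    · exact Or.inr (sameAxis1 w hw h hw2)
    · exact Or.inl (sameAxis0 w hw (pow_eq_zero_iff (n := 2) (by norm_num) |>.mp h) hw2)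
  · exact imult_eq F (X 0) ![0,1,0] 1 2 0 2 (by norm_num) (by decide) (by decide) (by decide)
      (by decide) rfl hv2 hI3
  · exact imult_eq F (X 0) ![0,0,1] 2 1 0 1 (by norm_num) (by decide) (by decide) (by decide)
      (by decide) rfl hv3 hI4
  · intro w hw h2 h3
    have hw0 : w 0 = 0 := by simpa using h3
    have hFw : w 1 * w 2 ^ 2 = 0 := by
      have := h2
      rw [hF] at this
      simpa [hw0] using this
    rcases mul_eq_zero.mp hFw with h | h
    · exact Or.inr (sameAxis2 w hw hw0 h)
    · exact Or.inl (sameAxis1 w hw hw0 (pow_eq_zero_iff (n := 2) (by norm_num) |>.mp h))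
  · exact imult_eq F (X 1) ![0,0,1] 2 0 1 2 (by norm_num) (by decide) (by decide) (by decide)
      (by decide) rfl hv3 hI5
  · exact imult_eq F (X 1) ![1,0,0] 0 2 1 1 (by norm_num) (by decide) (by decide) (by decide)
      (by decide) rfl hv1 hI6
  · intro w hw h2 h3
    have hw1 : w 1 = 0 := by simpa using h3
    have hFw : w 2 * w 0 ^ 2 = 0 := by
      have := h2
      rw [hF] at this
      simpa [hw1] using this
    rcases mul_eq_zero.mp hFw with h | h
    · exact Or.inr (sameAxis0 w hw hw1 h)
    · exact Or.inl (sameAxis2 w hw ((pow_eq_zero_iff (n := 2) (by norm_num)).mp h) hw1)
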